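/- For any real symmetric $d\times d$ matrix $\Sigma$ and positive integer $k$, the zonal polynomial $C_{(k)}(\Sigma) = \frac{k!}{(1/2)_k} \sum_{i_1+2i_2+\cdots+ki_k=k} \prod_{j=1}^k \frac{(\mathrm{tr}(\Sigma^j))^{i_j}}{i_j!(2j)^{i_j}}$ satisfies $|C_{(k)}(\Sigma)| \le \frac{(d^{1/2}/2)_k}{(1/2)_k} \|\Sigma\|^k$, where $\|\Sigma\| = (\mathrm{tr}(\Sigma^2))^{1/2}$ and $(a)_k$ is the rising factorial. -/

import Mathlib

/-- The rising factorial (Pochhammer symbol) `(a)_k = a (a+1) ⋯ (a+k-1)`. -/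
def risingFac (a : ℝ) (k : ℕ) : ℝ := ∏ i ∈ Finset.range k, (a + i)

/-- The zonal polynomial `C_{(k)}` of a symmetric matrix, expressed by the
multi-sum over all tuples `(i_1, …, i_k)` of nonnegative integers with
`i_1 + 2 i_2 + ⋯ + k i_k = k`, parametrized by partitions of `k`
(where `i_j` is the number of parts of the partition equal to `j`). -/
noncomputable def zonalC (d k : ℕ) (A : Matrix (Fin d) (Fin d) ℝ) : ℝ :=
  (Nat.factorial k : ℝ) / risingFac (1 / 2) k *
    ∑ p : Nat.Partition k, ∏ j ∈ Finset.Icc 1 k,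
      ((A ^ j).trace) ^ (p.parts.count j) /
        (Nat.factorial (p.parts.count j) * (2 * j) ^ (p.parts.count j))

open Finset


noncomputable def pw (y : ℝ) (s : Multiset ℕ) : ℝ :=
  ∏ j ∈ s.toFinset, y ^ s.count j / ((s.count j).factorial * (j : ℝ) ^ s.count j)

lemma pw_nonneg {y : ℝ} (hy : 0 ≤ y) (s : Multiset ℕ) : 0 ≤ pw y s :=
  Finset.prod_nonneg fun j _ => by positivity

lemma pw_eq_prod (y : ℝ) (s : Multiset ℕ) {t : Finset ℕ} (ht : s.toFinset ⊆ t) :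
    pw y s = ∏ j ∈ t, y ^ s.count j / ((s.count j).factorial * (j : ℝ) ^ s.count j) := by
  refine Finset.prod_subset ht fun x _ hx => ?_
  rw [Multiset.count_eq_zero_of_notMem (by simpa using hx)]
  simp

lemma pw_cons (y : ℝ) {j : ℕ} (hj : j ≠ 0) (s : Multiset ℕ) :
    pw y (j ::ₘ s) = y / (j * (s.count j + 1)) * pw y s := by
  classical
  have hjR : (j : ℝ) ≠ 0 := Nat.cast_ne_zero.mpr hj
  have hsub : s.toFinset ⊆ insert j s.toFinset := Finset.subset_insert _ _
  have h1 : pw y s = ∏ a ∈ insert j s.toFinset,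
      y ^ s.count a / ((s.count a).factorial * (a : ℝ) ^ s.count a) := pw_eq_prod y s hsub
  have h2 : pw y (j ::ₘ s) = ∏ a ∈ insert j s.toFinset,
      y ^ (j ::ₘ s).count a / (((j ::ₘ s).count a).factorial * (a : ℝ) ^ (j ::ₘ s).count a) := by
    refine pw_eq_prod y _ ?_
    rw [Multiset.toFinset_cons]
  have hjmem : j ∈ insert j s.toFinset := Finset.mem_insert_self _ _
  rw [h1, h2, ← Finset.mul_prod_erase _ _ hjmem, ← Finset.mul_prod_erase _ _ hjmem]
  have herase : ∀ a ∈ (insert j s.toFinset).erase j,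
      y ^ (j ::ₘ s).count a / (((j ::ₘ s).count a).factorial * (a : ℝ) ^ (j ::ₘ s).count a)
        = y ^ s.count a / ((s.count a).factorial * (a : ℝ) ^ s.count a) := by
    intro a ha
    rw [Multiset.count_cons_of_ne (Finset.ne_of_mem_erase ha)]
  rw [Finset.prod_congr rfl herase, Multiset.count_cons_self]
  set c := s.count j with hc
  have hfac : (c.factorial : ℝ) ≠ 0 := Nat.cast_ne_zero.mpr c.factorial_ne_zero
  have hcc : ((c : ℝ) + 1) ≠ 0 := by positivity
  rw [Nat.factorial_succ, ← mul_assoc]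
  congr 1
  push_cast
  field_simp
  ring

noncomputable def Z (y : ℝ) (n : ℕ) : ℝ := ∑ p : Nat.Partition n, pw y p.parts

lemma parts_mem_Icc {n : ℕ} (p : Nat.Partition n) {j : ℕ} (hj : j ∈ p.parts) :
    j ∈ Finset.Icc 1 n := by
  have h1 : 0 < j := p.parts_pos hj
  have h2 : j ≤ p.parts.sum := by
    obtain ⟨t, ht⟩ : ∃ t, p.parts = j ::ₘ t := ⟨p.parts.erase j, (Multiset.cons_erase hj).symm⟩
    rw [ht, Multiset.sum_cons]; omega
  rw [p.parts_sum] at h2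
  exact Finset.mem_Icc.mpr ⟨h1, h2⟩

lemma sum_mul_count {n : ℕ} (p : Nat.Partition n) :
    ∑ j ∈ Finset.Icc 1 n, j * p.parts.count j = n := by
  classical
  have h0 : ∑ a ∈ p.parts.toFinset, p.parts.count a • (id a) = n := by
    rw [← Finset.sum_multiset_map_count p.parts (id : ℕ → ℕ), Multiset.map_id, p.parts_sum]
  calc ∑ j ∈ Finset.Icc 1 n, j * p.parts.count j
      = ∑ j ∈ p.parts.toFinset, j * p.parts.count j := by
        refine (Finset.sum_subset (fun x hx => parts_mem_Icc p (Multiset.mem_toFinset.mp hx))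
          fun x _ hx => ?_).symm
        rw [Multiset.count_eq_zero_of_notMem (by simpa using hx), mul_zero]
    _ = n := by
        refine Eq.trans (Finset.sum_congr rfl fun x _ => ?_) h0
        simp [mul_comm]


lemma Z_rec (y : ℝ) {k : ℕ} (hk : 1 ≤ k) :
    (k : ℝ) * Z y k = y * ∑ j ∈ Finset.Icc 1 k, Z y (k - j) := by
  classical
  have key : ∀ j ∈ Finset.Icc 1 k,
      (∑ p : Nat.Partition k, ((j * p.parts.count j : ℕ) : ℝ) * pw y p.parts)
        = y * Z y (k - j) := by
    intro j hj
    obtain ⟨hj1, hjk⟩ := Finset.mem_Icc.mp hj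
    have hj0 : j ≠ 0 := by omega
    rw [← Finset.sum_filter_of_ne (p := fun p : Nat.Partition k => j ∈ p.parts)
      (fun p _ hne => by
        by_contra hmem
        exact hne (by rw [Multiset.count_eq_zero_of_notMem hmem, mul_zero, Nat.cast_zero,
          zero_mul]))]
    rw [Z, Finset.mul_sum]
    refine Finset.sum_bij' (i := fun (p : Nat.Partition k)
        (hp : p ∈ Finset.univ.filter fun p => j ∈ p.parts) =>
        (⟨p.parts.erase j, fun hi => p.parts_pos (Multiset.mem_of_mem_erase hi), by
          have hmem : j ∈ p.parts := (Finset.mem_filter.mp hp).2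
          have := p.parts_sum
          have h2 : j + (p.parts.erase j).sum = k := by
            rw [← Multiset.sum_cons, Multiset.cons_erase hmem, p.parts_sum]
          omega⟩ : Nat.Partition (k - j)))
      (j := fun (q : Nat.Partition (k - j)) _ =>
        (⟨j ::ₘ q.parts, fun hi => by
            rcases Multiset.mem_cons.mp hi with h | h
            · omega
            · exact q.parts_pos h, by
          rw [Multiset.sum_cons, q.parts_sum]; omega⟩ : Nat.Partition k))
      ?_ ?_ ?_ ?_ ?_
    · intro p hp
      exact Finset.mem_univ _
    · intro q hq
      simp only [Finset.mem_filter, Finset.mem_univ, true_and]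
      exact Multiset.mem_cons_self _ _
    · intro p hp
      have hmem : j ∈ p.parts := (Finset.mem_filter.mp hp).2
      ext1
      exact Multiset.cons_erase hmem
    · intro q hq
      ext1
      exact Multiset.erase_cons_head _ _
    · intro p hp
      have hmem : j ∈ p.parts := (Finset.mem_filter.mp hp).2
      have hparts : j ::ₘ p.parts.erase j = p.parts := Multiset.cons_erase hmem
      set t := p.parts.erase j with hts
      have hcount : p.parts.count j = t.count j + 1 := by
        rw [← hparts, Multiset.count_cons_self]
      have hpw : pw y p.parts = y / (j * (t.count j + 1)) * pw y t := by
        rw [← hparts, pw_cons y hj0]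
      rw [hcount, hpw]
      have hjR : (j : ℝ) ≠ 0 := Nat.cast_ne_zero.mpr hj0
      have hcR : ((t.count j : ℝ) + 1) ≠ 0 := by positivity
      push_cast
      field_simp
      rfl
  calc (k : ℝ) * Z y k
      = ∑ p : Nat.Partition k, ∑ j ∈ Finset.Icc 1 k,
          ((j * p.parts.count j : ℕ) : ℝ) * pw y p.parts := by
        rw [Z, Finset.mul_sum]
        refine Finset.sum_congr rfl fun p _ => ?_
        rw [← Finset.sum_mul]
        congr 1
        exact_mod_cast (sum_mul_count p).symm
    _ = ∑ j ∈ Finset.Icc 1 k, ∑ p : Nat.Partition k,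
          ((j * p.parts.count j : ℕ) : ℝ) * pw y p.parts := Finset.sum_comm
    _ = ∑ j ∈ Finset.Icc 1 k, y * Z y (k - j) := Finset.sum_congr rfl key
    _ = y * ∑ j ∈ Finset.Icc 1 k, Z y (k - j) := by rw [Finset.mul_sum]

lemma risingFac_succ (a : ℝ) (n : ℕ) : risingFac a (n + 1) = risingFac a n * (a + n) :=
  Finset.prod_range_succ _ _

lemma risingFac_succ' (a : ℝ) (n : ℕ) : risingFac a (n + 1) = a * risingFac (a + 1) n := by
  rw [risingFac, Finset.prod_range_succ']
  have h1 : ∏ i ∈ Finset.range n, (a + ↑(i + 1)) = risingFac (a + 1) n :=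
    Finset.prod_congr rfl fun i _ => by push_cast; ring
  rw [h1]
  push_cast
  ring

lemma sum_risingFac (y : ℝ) (n : ℕ) :
    ∑ m ∈ Finset.range (n + 1), risingFac y m / m.factorial
      = risingFac (y + 1) n / n.factorial := by
  induction n with
  | zero => simp [risingFac]
  | succ n ih =>
    rw [Finset.sum_range_succ, ih, risingFac_succ' y n, risingFac_succ (y + 1) n,
      Nat.factorial_succ]
    have h1 : (n.factorial : ℝ) ≠ 0 := Nat.cast_ne_zero.mpr n.factorial_ne_zero
    have h2 : ((n : ℝ) + 1) ≠ 0 := by positivity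
    push_cast
    field_simp
    ring

lemma Z_eq (y : ℝ) : ∀ k : ℕ, Z y k = risingFac y k / k.factorial := by
  intro k
  induction k using Nat.strong_induction_on with
  | _ k ih =>
    match k with
    | 0 =>
      have hp : ∀ p : Nat.Partition 0, pw y p.parts = 1 := by
        intro p
        have h0 : p.parts = 0 := by
          rw [Multiset.eq_zero_iff_forall_notMem]
          intro a ha
          have h1 := p.parts_pos ha
          have h2 : a ≤ p.parts.sum := by
            obtain ⟨t, ht⟩ : ∃ t, p.parts = a ::ₘ t :=
              ⟨p.parts.erase a, (Multiset.cons_erase ha).symm⟩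
            rw [ht, Multiset.sum_cons]; omega
          rw [p.parts_sum] at h2
          omega
        rw [h0, pw]
        simp
      have hpw0 : pw y 0 = 1 := by rw [pw]; simp
      simp [Z, hp, risingFac, hpw0]
    | (n + 1) =>
      have hrec := Z_rec y (k := n + 1) (by omega)
      have hsum : ∑ j ∈ Finset.Icc 1 (n + 1), Z y (n + 1 - j)
          = ∑ m ∈ Finset.range (n + 1), risingFac y m / m.factorial := by
        rw [show ∑ j ∈ Finset.Icc 1 (n + 1), Z y (n + 1 - j)
            = ∑ m ∈ Finset.range (n + 1), Z y m from
          Finset.sum_nbij' (i := fun j => n + 1 - j) (j := fun m => n + 1 - m)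
            (fun a ha => by simp only [Finset.mem_Icc] at ha; simp; omega)
            (fun a ha => by simp only [Finset.mem_range] at ha; simp only [Finset.mem_Icc]; omega)
            (fun a ha => by
              simp only [Finset.mem_Icc] at ha
              show n + 1 - (n + 1 - a) = a
              omega)
            (fun a ha => by
              simp only [Finset.mem_range] at ha
              show n + 1 - (n + 1 - a) = a
              omega)
            (fun a ha => rfl)]
        refine Finset.sum_congr rfl fun m hm => ?_
        exact ih m (by simp only [Finset.mem_range] at hm; omega)
      rw [hsum, sum_risingFac] at hrec
      have hn1 : ((n : ℝ) + 1) ≠ 0 := by positivity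
      have hfac : (n.factorial : ℝ) ≠ 0 := Nat.cast_ne_zero.mpr n.factorial_ne_zero
      have : Z y (n + 1) = (y * (risingFac (y + 1) n / n.factorial)) / (n + 1) := by
        field_simp at hrec ⊢
        push_cast at hrec ⊢
        linarith [hrec]
      rw [this, risingFac_succ' y n, Nat.factorial_succ, ← mul_div_assoc, div_div]
      push_cast
      ring_nf


lemma trace_pow_eq {d : ℕ} {A : Matrix (Fin d) (Fin d) ℝ} (hA : A.IsHermitian) (j : ℕ) :
    (A ^ j).trace = ∑ i, hA.eigenvalues i ^ j := by
  classical
  set U : Matrix (Fin d) (Fin d) ℝ := (hA.eigenvectorUnitary : Matrix (Fin d) (Fin d) ℝ) with hU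
  set D : Matrix (Fin d) (Fin d) ℝ :=
    Matrix.diagonal (RCLike.ofReal ∘ hA.eigenvalues) with hD
  have h1 : star U * U = 1 := Unitary.coe_star_mul_self hA.eigenvectorUnitary
  have h2 : U * star U = 1 := Unitary.coe_mul_star_self hA.eigenvectorUnitary
  have hpow : A ^ j = U * D ^ j * star U := by
    induction j with
    | zero => simp [h2]
    | succ n ih =>
      rw [pow_succ, ih]
      conv_lhs => rw [hA.spectral_theorem]
      rw [Unitary.conjStarAlgAut_apply, ← hU, ← hD]
      rw [pow_succ]
      simp only [Matrix.mul_assoc]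
      rw [← Matrix.mul_assoc (star U) U, h1, Matrix.one_mul]
  rw [hpow, Matrix.trace_mul_cycle, h1, Matrix.one_mul, hD,
    Matrix.diagonal_pow, Matrix.trace_diagonal]
  simp

lemma trace_bound {d : ℕ} {A : Matrix (Fin d) (Fin d) ℝ} (hA : A.IsHermitian)
    (hd : 1 ≤ d) {j : ℕ} (hj : 1 ≤ j) :
    |(A ^ j).trace| ≤ Real.sqrt d * Real.sqrt ((A ^ 2).trace) ^ j := by
  classical
  set l := hA.eigenvalues with hl
  set N := Real.sqrt ((A ^ 2).trace) with hN
  have hNnn : 0 ≤ N := Real.sqrt_nonneg _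
  have htr2 : (A ^ 2).trace = ∑ i, l i ^ 2 := trace_pow_eq hA 2
  have hsumnn : 0 ≤ ∑ i, l i ^ 2 := Finset.sum_nonneg fun i _ => sq_nonneg _
  have hN2 : N ^ 2 = ∑ i, l i ^ 2 := by
    rw [hN, htr2, Real.sq_sqrt hsumnn]
  have hiN : ∀ i, |l i| ≤ N := by
    intro i
    have h1 : l i ^ 2 ≤ ∑ i, l i ^ 2 :=
      Finset.single_le_sum (fun i _ => sq_nonneg (l i)) (Finset.mem_univ i)
    calc |l i| = Real.sqrt (l i ^ 2) := (Real.sqrt_sq_eq_abs _).symm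
      _ ≤ Real.sqrt (∑ i, l i ^ 2) := Real.sqrt_le_sqrt h1
      _ = N := by rw [hN, htr2]
  have hd1 : (1 : ℝ) ≤ Real.sqrt d := by
    rw [show (1 : ℝ) = Real.sqrt 1 from Real.sqrt_one.symm]
    exact Real.sqrt_le_sqrt (by exact_mod_cast hd)
  rcases eq_or_lt_of_le hj with h1 | h2
  · -- j = 1
    subst h1
    have htr1 : (A ^ 1).trace = ∑ i, l i := by
      rw [trace_pow_eq hA 1]
      simp
      rfl
    have hcs : (∑ i, l i) ^ 2 ≤ (d : ℝ) * ∑ i, l i ^ 2 := by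
      have h := sq_sum_le_card_mul_sum_sq (s := (Finset.univ : Finset (Fin d))) (f := l)
      simpa using h
    calc |(A ^ 1).trace| = Real.sqrt ((∑ i, l i) ^ 2) := by rw [htr1, Real.sqrt_sq_eq_abs]
      _ ≤ Real.sqrt ((d : ℝ) * ∑ i, l i ^ 2) := Real.sqrt_le_sqrt hcs
      _ = Real.sqrt d * N := by rw [Real.sqrt_mul (by positivity), hN, htr2]
      _ = Real.sqrt d * N ^ 1 := by rw [pow_one]
  · -- 2 ≤ j
    have h2j : 2 ≤ j := h2
    have htrj : (A ^ j).trace = ∑ i, l i ^ j := trace_pow_eq hA j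
    have hterm : ∀ i, |l i ^ j| ≤ l i ^ 2 * N ^ (j - 2) := by
      intro i
      have e : |l i| ^ j = |l i| ^ 2 * |l i| ^ (j - 2) := by
        rw [← pow_add]
        congr 1
        omega
      rw [abs_pow, e, sq_abs]
      exact mul_le_mul_of_nonneg_left
        (pow_le_pow_left₀ (abs_nonneg _) (hiN i) _) (sq_nonneg _)
    calc |(A ^ j).trace| = |∑ i, l i ^ j| := by rw [htrj]
      _ ≤ ∑ i, |l i ^ j| := Finset.abs_sum_le_sum_abs _ _
      _ ≤ ∑ i, l i ^ 2 * N ^ (j - 2) := Finset.sum_le_sum fun i _ => hterm i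
      _ = (∑ i, l i ^ 2) * N ^ (j - 2) := by rw [← Finset.sum_mul]
      _ = N ^ j := by rw [← hN2, ← pow_add]; congr 1; omega
      _ ≤ Real.sqrt d * N ^ j := le_mul_of_one_le_left (by positivity) hd1

theorem stmt_14 (d : ℕ) (A : Matrix (Fin d) (Fin d) ℝ) (hA : A.IsSymm)
    (k : ℕ) (hk : 1 ≤ k) :
    |zonalC d k A| ≤
      risingFac (Real.sqrt d / 2) k / risingFac (1 / 2) k *
        Real.sqrt ((A ^ 2).trace) ^ k := by
  classical
  have hH : A.IsHermitian := by
    rwa [Matrix.IsHermitian, Matrix.conjTranspose_eq_transpose_of_trivial]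
  have hrpos : 0 < risingFac (1 / 2) k := Finset.prod_pos fun i _ => by positivity
  rcases Nat.eq_zero_or_pos d with hd | hd
  · -- degenerate case d = 0
    subst hd
    have htr : ∀ j : ℕ, (A ^ j).trace = 0 := fun j => by
      simp [Matrix.trace]
    have hz : zonalC 0 k A = 0 := by
      rw [zonalC, Finset.sum_eq_zero, mul_zero]
      intro p _
      obtain ⟨j, hj⟩ : ∃ j, j ∈ p.parts := by
        by_contra h
        push_neg at h
        have h0 : p.parts = 0 := Multiset.eq_zero_iff_forall_notMem.mpr h
        have := p.parts_sum
        rw [h0] at this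
        simp at this
        omega
      refine Finset.prod_eq_zero (parts_mem_Icc p hj) ?_
      have hc : p.parts.count j ≠ 0 := by
        simpa [Multiset.count_eq_zero] using hj
      rw [htr j, zero_pow hc, zero_div]
    rw [hz, abs_zero]
    have h2 : ((A ^ 2).trace) = 0 := htr 2
    rw [h2, Real.sqrt_zero, zero_pow (by omega : k ≠ 0), mul_zero]
  · -- main case 1 ≤ d
    set a : ℝ := Real.sqrt d with ha
    set N : ℝ := Real.sqrt ((A ^ 2).trace) with hN
    have hNnn : 0 ≤ N := Real.sqrt_nonneg _
    have hann : 0 ≤ a := Real.sqrt_nonneg _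
    have hT : ∀ j : ℕ, 1 ≤ j → |(A ^ j).trace| ≤ a * N ^ j := fun j hj =>
      trace_bound hH hd hj
    have hpart : ∀ p : Nat.Partition k,
        |∏ j ∈ Finset.Icc 1 k, ((A ^ j).trace) ^ (p.parts.count j) /
            ((Nat.factorial (p.parts.count j) : ℝ) * (2 * j) ^ (p.parts.count j))|
          ≤ N ^ k * pw (a / 2) p.parts := by
      intro p
      rw [Finset.abs_prod]
      have hstep : ∀ j ∈ Finset.Icc 1 k,
          |((A ^ j).trace) ^ (p.parts.count j) /
              ((Nat.factorial (p.parts.count j) : ℝ) * (2 * j) ^ (p.parts.count j))|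
            ≤ (N ^ j) ^ (p.parts.count j) *
              ((a / 2) ^ (p.parts.count j) /
                ((Nat.factorial (p.parts.count j) : ℝ) * (j : ℝ) ^ (p.parts.count j))) := by
        intro j hj
        obtain ⟨hj1, hjk⟩ := Finset.mem_Icc.mp hj
        set c := p.parts.count j with hc
        have hjR : (0 : ℝ) < (j : ℝ) := by exact_mod_cast hj1
        have hfac : (0 : ℝ) < (Nat.factorial c : ℝ) := by
          exact_mod_cast c.factorial_pos
        have hden : (0 : ℝ) < (Nat.factorial c : ℝ) * (2 * (j : ℝ)) ^ c := by positivity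
        rw [abs_div, abs_pow, abs_of_pos hden]
        have hmono : |(A ^ j).trace| ^ c ≤ (a * N ^ j) ^ c :=
          pow_le_pow_left₀ (abs_nonneg _) (hT j hj1) c
        calc |(A ^ j).trace| ^ c / ((Nat.factorial c : ℝ) * (2 * (j : ℝ)) ^ c)
            ≤ (a * N ^ j) ^ c / ((Nat.factorial c : ℝ) * (2 * (j : ℝ)) ^ c) := by
              gcongr
          _ = (N ^ j) ^ c * ((a / 2) ^ c / ((Nat.factorial c : ℝ) * (j : ℝ) ^ c)) := by
              rw [mul_pow a, mul_pow 2, div_pow]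
              field_simp
      calc ∏ j ∈ Finset.Icc 1 k,
            |((A ^ j).trace) ^ (p.parts.count j) /
              ((Nat.factorial (p.parts.count j) : ℝ) * (2 * j) ^ (p.parts.count j))|
          ≤ ∏ j ∈ Finset.Icc 1 k, (N ^ j) ^ (p.parts.count j) *
              ((a / 2) ^ (p.parts.count j) /
                ((Nat.factorial (p.parts.count j) : ℝ) * (j : ℝ) ^ (p.parts.count j))) :=
            Finset.prod_le_prod (fun j _ => abs_nonneg _) hstep
        _ = (∏ j ∈ Finset.Icc 1 k, (N ^ j) ^ (p.parts.count j)) *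
              ∏ j ∈ Finset.Icc 1 k, (a / 2) ^ (p.parts.count j) /
                ((Nat.factorial (p.parts.count j) : ℝ) * (j : ℝ) ^ (p.parts.count j)) :=
            Finset.prod_mul_distrib
        _ = N ^ k * pw (a / 2) p.parts := by
            congr 1
            · rw [show ∀ s : Finset ℕ, ∏ j ∈ s, (N ^ j) ^ (p.parts.count j)
                  = ∏ j ∈ s, N ^ (j * p.parts.count j) from fun s =>
                Finset.prod_congr rfl fun j _ => by rw [pow_mul],
                Finset.prod_pow_eq_pow_sum, sum_mul_count]
            · exact (pw_eq_prod (a / 2) p.parts fun x hx =>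
                parts_mem_Icc p (Multiset.mem_toFinset.mp hx)).symm
    have habs : |zonalC d k A| ≤
        ((Nat.factorial k : ℝ) / risingFac (1 / 2) k) * (N ^ k * Z (a / 2) k) := by
      rw [zonalC, abs_mul, abs_of_nonneg (by positivity :
        (0 : ℝ) ≤ (Nat.factorial k : ℝ) / risingFac (1 / 2) k)]
      refine mul_le_mul_of_nonneg_left ?_ (by positivity)
      calc |∑ p : Nat.Partition k, ∏ j ∈ Finset.Icc 1 k,
              ((A ^ j).trace) ^ (p.parts.count j) /
                ((Nat.factorial (p.parts.count j) : ℝ) * (2 * j) ^ (p.parts.count j))|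
          ≤ ∑ p : Nat.Partition k, |∏ j ∈ Finset.Icc 1 k,
              ((A ^ j).trace) ^ (p.parts.count j) /
                ((Nat.factorial (p.parts.count j) : ℝ) * (2 * j) ^ (p.parts.count j))| :=
            Finset.abs_sum_le_sum_abs _ _
        _ ≤ ∑ p : Nat.Partition k, N ^ k * pw (a / 2) p.parts :=
            Finset.sum_le_sum fun p _ => hpart p
        _ = N ^ k * Z (a / 2) k := by rw [Z, Finset.mul_sum]
    rw [Z_eq (a / 2) k] at habs
    refine habs.trans (le_of_eq ?_)
    have hfk : (Nat.factorial k : ℝ) ≠ 0 := Nat.cast_ne_zero.mpr k.factorial_ne_zero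
    field_simp
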